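/- Suppose {q_n} is a sequence of positive reals such that the sequence Q_n := p_n (q_{n+1} - q_n + 1)/q_n is nonincreasing. Then liminf_{n→∞} (p_{n+1} - p_n) < ∞, i.e., the prime gaps g_n are bounded along a subsequence. -/

import Mathlib

/-- `p n` is the `n`-th prime number (1-indexed), as a real number. -/
noncomputable def p (n : ℕ) : ℝ := Nat.nth Nat.Prime (n - 1)

lemma p_pos (n : ℕ) : 0 < p n := by
  have h := Nat.nth_mem_of_infinite Nat.infinite_setOf_prime (n - 1)
  unfold p
  exact_mod_cast h.pos

lemma primesEquiv : ∃ e : ℕ ≃ Nat.Primes, ∀ n, (e n : ℕ) = Nat.nth Nat.Prime n := by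
  refine ⟨⟨fun n => ⟨Nat.nth Nat.Prime n, Nat.nth_mem_of_infinite Nat.infinite_setOf_prime n⟩,
    fun pr => Nat.count Nat.Prime pr, ?_, ?_⟩, fun n => rfl⟩
  · intro n; simp [Nat.count_nth_of_infinite Nat.infinite_setOf_prime]
  · intro pr; exact Subtype.ext (Nat.nth_count pr.2)

lemma not_summable_nth_prime : ¬ Summable (fun n : ℕ => (1 : ℝ) / Nat.nth Nat.Prime n) := by
  obtain ⟨e, he⟩ := primesEquiv
  intro h
  apply Nat.Primes.not_summable_one_div
  have := (e.symm.summable_iff (f := fun n : ℕ => (1 : ℝ) / Nat.nth Nat.Prime n)).mpr h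
  convert this using 1
  funext pr
  simp only [Function.comp]
  congr 1
  rw [← he (e.symm pr), e.apply_symm_apply]

open Filter in
theorem liminf_gap_lt_top_of_antitone (q : ℕ → ℝ) (hq : ∀ n, 0 < q n)
    (hQ : Antitone (fun n : ℕ => p n * ((q (n + 1) - q n + 1) / q n))) :
    Filter.atTop.liminf (fun n : ℕ => ((p (n + 1) - p n : ℝ) : EReal)) < ⊤ := by
  set Q : ℕ → ℝ := fun n : ℕ => p n * ((q (n + 1) - q n + 1) / q n) with hQdef
  -- Step 1: frequently, the gap is less than Q n
  have hfreq : ∃ᶠ n in atTop, p (n + 1) - p n < Q n := by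
    by_contra hcon
    rw [Filter.not_frequently] at hcon
    rw [Filter.eventually_atTop] at hcon
    obtain ⟨N, hN⟩ := hcon
    -- for n ≥ N : Q n ≤ p (n+1) - p n, hence q(n+1)/p(n+1) + 1/p(n+1) ≤ q n / p n
    have key : ∀ n, N ≤ n → q (n+1) / p (n+1) + 1 / p (n+1) ≤ q n / p n := by
      intro n hn
      have h1 : Q n ≤ p (n + 1) - p n := not_lt.mp (hN n hn)
      have hpn := p_pos n
      have hpn1 := p_pos (n+1)
      have hqn := hq n
      have h1' : p n * (q (n+1) - q n + 1) / q n ≤ p (n + 1) - p n := by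
        rw [mul_div_assoc]; exact h1
      have h2 : p n * (q (n+1) - q n + 1) ≤ (p (n+1) - p n) * q n :=
        (div_le_iff₀ hqn).mp h1'
      clear h1 h1'
      -- p(n+1) q n ≥ p n q(n+1) + p n
      have h3 : p n * q (n+1) + p n ≤ p (n+1) * q n := by nlinarith
      rw [← add_div, div_le_div_iff₀ hpn1 hpn]
      nlinarith
    -- telescoping: partial sums of 1/p (N+k+1) are bounded
    have hsum : ∀ m : ℕ, ∑ k ∈ Finset.range m, 1 / p (N + k + 1) ≤ q N / p N := by
      intro m
      induction m with
      | zero => simp; exact (div_pos (hq N) (p_pos N)).le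
      | succ m ih =>
        have step : ∀ j : ℕ, ∑ k ∈ Finset.range j, 1 / p (N + k + 1) + q (N + j) / p (N + j)
            ≤ q N / p N := by
          intro j
          induction j with
          | zero => simp
          | succ j ihj =>
            rw [Finset.sum_range_succ]
            have := key (N + j) (Nat.le_add_right N j)
            have h4 : q (N + j + 1) / p (N + j + 1) + 1 / p (N + j + 1) ≤ q (N + j) / p (N + j) :=
              this
            calc ∑ k ∈ Finset.range j, 1 / p (N + k + 1) + 1 / p (N + j + 1)
                  + q (N + (j + 1)) / p (N + (j + 1))
                = ∑ k ∈ Finset.range j, 1 / p (N + k + 1)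
                  + (q (N + j + 1) / p (N + j + 1) + 1 / p (N + j + 1)) := by
                  rw [show N + (j + 1) = N + j + 1 from (Nat.add_assoc N j 1).symm]; ring
              _ ≤ ∑ k ∈ Finset.range j, 1 / p (N + k + 1) + q (N + j) / p (N + j) := by linarith
              _ ≤ q N / p N := ihj
        have hsucc := step (m + 1)
        have hqq : 0 < q (N + (m+1)) / p (N + (m+1)) := div_pos (hq _) (p_pos _)
        linarith
    -- so the series of prime reciprocals converges: contradiction
    have hsummable : Summable (fun k : ℕ => 1 / p (N + k + 1)) := by
      apply summable_of_sum_range_le (fun k => (one_div_pos.mpr (p_pos _)).le) hsum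
    apply not_summable_nth_prime
    have h5 : Summable (fun k : ℕ => (1 : ℝ) / Nat.nth Nat.Prime (N + k)) := by
      have heq : (fun k : ℕ => (1 : ℝ) / Nat.nth Nat.Prime (N + k))
          = fun k : ℕ => 1 / p (N + k + 1) := by
        funext k; simp [p]
      rw [heq]; exact hsummable
    rw [← summable_nat_add_iff N]
    have heq2 : (fun k : ℕ => (1 : ℝ) / Nat.nth Nat.Prime (k + N))
        = fun k : ℕ => (1 : ℝ) / Nat.nth Nat.Prime (N + k) := by
      funext k; rw [Nat.add_comm]
    exact heq2 ▸ h5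
  -- Step 2: liminf ≤ Q 0 < ⊤
  have hle : Filter.atTop.liminf (fun n : ℕ => ((p (n + 1) - p n : ℝ) : EReal)) ≤ (Q 0 : EReal) := by
    apply Filter.liminf_le_of_frequently_le'
    apply hfreq.mono
    intro n hn
    have : Q n ≤ Q 0 := hQ (Nat.zero_le n)
    exact_mod_cast (hn.trans_le this).le
  exact hle.trans_lt (EReal.coe_lt_top _)
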